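/- The map $X \mapsto \operatorname{Tr}\sqrt{X}$ is subadditive on positive semidefinite operators: for all positive semidefinite operators $X, Y$ on a finite-dimensional Hilbert space, $\operatorname{Tr}\sqrt{X+Y} \le \operatorname{Tr}\sqrt{X} + \operatorname{Tr}\sqrt{Y}$. -/

import Mathlib

open Matrix
open scoped ComplexOrder

/-- The square root of a positive semidefinite matrix, as defined in the older Mathlib
(removed since). -/
noncomputable def Matrix.PosSemidef.sqrt {n : Type*} {𝕜 : Type*} [Fintype n] [RCLike 𝕜]
    [DecidableEq n] {A : Matrix n n 𝕜} (hA : A.PosSemidef) : Matrix n n 𝕜 :=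
  hA.1.eigenvectorUnitary.1 * diagonal ((↑) ∘ (√·) ∘ hA.1.eigenvalues) *
    (star hA.1.eigenvectorUnitary : Matrix n n 𝕜)

open scoped MatrixOrder in
theorem Matrix.PosSemidef.sqrt_eq_cfc_sqrt {n : Type*} {𝕜 : Type*} [Fintype n] [RCLike 𝕜]
    [DecidableEq n] {A : Matrix n n 𝕜} (hA : A.PosSemidef) : hA.sqrt = CFC.sqrt A := by
  rw [CFC.sqrt_eq_cfc, cfc_nnreal_eq_real _ A, hA.1.cfc_eq]
  simp only [IsHermitian.cfc, Matrix.PosSemidef.sqrt, Unitary.conjStarAlgAut_apply]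
  have hs : (fun x : ℝ => √x) = fun x => ((NNReal.sqrt x.toNNReal : NNReal) : ℝ) := by
    funext x; rw [Real.sqrt]
  rw [hs]

open scoped MatrixOrder in
theorem Matrix.PosSemidef.posSemidef_sqrt {n : Type*} {𝕜 : Type*} [Fintype n] [RCLike 𝕜]
    [DecidableEq n] {A : Matrix n n 𝕜} (hA : A.PosSemidef) : hA.sqrt.PosSemidef := by
  rw [hA.sqrt_eq_cfc_sqrt]
  exact (CFC.sqrt_nonneg A).posSemidef

open scoped MatrixOrder in
theorem Matrix.PosSemidef.sqrt_mul_self {n : Type*} {𝕜 : Type*} [Fintype n] [RCLike 𝕜]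
    [DecidableEq n] {A : Matrix n n 𝕜} (hA : A.PosSemidef) : hA.sqrt * hA.sqrt = A := by
  rw [hA.sqrt_eq_cfc_sqrt]
  exact CFC.sqrt_mul_sqrt_self A hA.nonneg

noncomputable def matAbs {m : ℕ} (A : Matrix (Fin m) (Fin m) ℂ) : Matrix (Fin m) (Fin m) ℂ :=
  (Matrix.posSemidef_conjTranspose_mul_self A).sqrt

noncomputable def traceNorm {m : ℕ} (A : Matrix (Fin m) (Fin m) ℂ) : ℝ :=
  ((matAbs A).trace).re

open Classical in
noncomputable def psdSqrt {m : ℕ} (A : Matrix (Fin m) (Fin m) ℂ) : Matrix (Fin m) (Fin m) ℂ :=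
  if h : A.PosSemidef then h.sqrt else 0

noncomputable def fid {m : ℕ} (A B : Matrix (Fin m) (Fin m) ℂ) : ℝ :=
  traceNorm (psdSqrt A * psdSqrt B)

noncomputable def matPosPart {m : ℕ} (A : Matrix (Fin m) (Fin m) ℂ) : Matrix (Fin m) (Fin m) ℂ :=
  (2⁻¹ : ℂ) • (matAbs A + A)

noncomputable def matNegPart {m : ℕ} (A : Matrix (Fin m) (Fin m) ℂ) : Matrix (Fin m) (Fin m) ℂ :=
  (2⁻¹ : ℂ) • (matAbs A - A)

section Aux

variable {d : ℕ}


private lemma psd_trace_re_nonneg' {M : Matrix (Fin d) (Fin d) ℂ} (hM : M.PosSemidef) :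
    0 ≤ M.trace.re := by
  rw [Matrix.trace]
  have h : ∀ i, 0 ≤ (M.diag i).re := by
    intro i
    have h2 := hM.dotProduct_mulVec_nonneg (Pi.single i 1)
    have : star (Pi.single i 1) ⬝ᵥ M *ᵥ Pi.single i 1 = M i i := by
      simp [Matrix.mulVec_single, dotProduct, Pi.single_apply, Finset.sum_ite_eq]
    rw [this] at h2
    exact (Complex.le_def.mp h2).1
  calc (0:ℝ) = (∑ i, (0:ℝ)) := by simp
  _ ≤ _ := by
    rw [Complex.re_sum]
    exact Finset.sum_le_sum fun i _ => h i

private lemma trace_re_mono' {M N : Matrix (Fin d) (Fin d) ℂ} (h : (N - M).PosSemidef) :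
    M.trace.re ≤ N.trace.re := by
  have := psd_trace_re_nonneg' h
  rw [Matrix.trace_sub, Complex.sub_re] at this
  linarith

private lemma smul_one_posDef' {ε : ℝ} (hε : 0 < ε) :
    ((ε : ℂ) • (1 : Matrix (Fin d) (Fin d) ℂ)).PosDef := by
  have h : (ε:ℂ) • (1 : Matrix (Fin d) (Fin d) ℂ) = Matrix.diagonal (fun _ => (ε:ℂ)) := by
    ext i j
    by_cases hij : i = j <;>
      simp [Matrix.one_apply, Matrix.diagonal_apply, hij]
  rw [h]
  exact Matrix.PosDef.diagonal fun _ => by exact_mod_cast hε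

private lemma psd_sub_sq' {M : Matrix (Fin d) (Fin d) ℂ} (hM : M.PosSemidef)
    (h1 : ((1 : Matrix (Fin d) (Fin d) ℂ) - M).PosSemidef) : (M - M * M).PosSemidef := by
  set S := hM.sqrt with hSdef
  have hss : S * S = M := hM.sqrt_mul_self
  have hSh : Sᴴ = S := hM.posSemidef_sqrt.1
  have hps := h1.mul_mul_conjTranspose_same S
  rw [hSh] at hps
  have key : S * (1 - M) * S = M - M * M := by
    rw [← hss]; noncomm_ring
  rwa [key] at hps

private lemma psd_sub_of_sq_psd_sub' {A T : Matrix (Fin d) (Fin d) ℂ} (hA : A.PosSemidef)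
    (hT : T.PosSemidef) (h : (T * T - A * A).PosSemidef) : (T - A).PosSemidef := by
  have hH : (T - A).IsHermitian := hT.1.sub hA.1
  refine hH.posSemidef_iff_eigenvalues_nonneg.mpr fun i => ?_
  by_contra ht
  push_neg at ht
  change hH.eigenvalues i < 0 at ht
  set t := hH.eigenvalues i with htdef
  set v : (Fin d) → ℂ := ⇑(hH.eigenvectorBasis i) with hvdef
  have hv : v ≠ 0 := by
    intro h0
    exact hH.eigenvectorBasis.orthonormal.ne_zero i
      (by ext j; exact congrFun h0 j)
  have hv' : (T - A) *ᵥ v = t • v := hH.mulVec_eigenvectorBasis i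
  have key : star v ⬝ᵥ (T * T - A * A) *ᵥ v
      = t * (star v ⬝ᵥ T *ᵥ v + star v ⬝ᵥ A *ᵥ v) := calc
    star v ⬝ᵥ (T * T - A * A) *ᵥ v
        = star v ⬝ᵥ T *ᵥ (T - A) *ᵥ v + star v ⬝ᵥ (T - A) *ᵥ A *ᵥ v := by
      rw [mulVec_mulVec, mulVec_mulVec, ← dotProduct_add, ← add_mulVec, mul_sub, sub_mul,
        add_sub, sub_add_cancel]
    _ = t * (star v ⬝ᵥ T *ᵥ v) + (star v) ᵥ* (T - A)ᴴ ⬝ᵥ A *ᵥ v := by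
      rw [hv', mulVec_smul, dotProduct_smul, Complex.real_smul,
        dotProduct_mulVec _ (T - A), hH]
    _ = t * (star v ⬝ᵥ T *ᵥ v + star v ⬝ᵥ A *ᵥ v) := by
      have h4 : (star v) ᵥ* (T - A)ᴴ ⬝ᵥ (A *ᵥ v) = (t:ℂ) * (star v ⬝ᵥ A *ᵥ v) := by
        rw [← star_mulVec, hv', star_smul, star_trivial, smul_dotProduct, Complex.real_smul]
      rw [h4]
      ring
  have hs : (0:ℂ) ≤ star v ⬝ᵥ T *ᵥ v + star v ⬝ᵥ A *ᵥ v := add_nonneg (hT.dotProduct_mulVec_nonneg v) (hA.dotProduct_mulVec_nonneg v)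
  have hkey0 : (0:ℂ) ≤ (t:ℂ) * (star v ⬝ᵥ T *ᵥ v + star v ⬝ᵥ A *ᵥ v) := key ▸ h.dotProduct_mulVec_nonneg v
  have hs0 : star v ⬝ᵥ T *ᵥ v + star v ⬝ᵥ A *ᵥ v = 0 := by
    set s : ℂ := star v ⬝ᵥ T *ᵥ v + star v ⬝ᵥ A *ᵥ v with hsdef
    have him : s.im = 0 := ((Complex.le_def.mp hs).2).symm
    have hre0 : 0 ≤ s.re := by simpa using (Complex.le_def.mp hs).1
    have hre : 0 ≤ ((t:ℂ) * s).re := by simpa using (Complex.le_def.mp hkey0).1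
    rw [Complex.mul_re, Complex.ofReal_re, Complex.ofReal_im, zero_mul, sub_zero] at hre
    have : s.re = 0 := by nlinarith
    exact Complex.ext (by simp [this]) (by simp [him])
  have h_van : star v ⬝ᵥ T *ᵥ v = 0 ∧ star v ⬝ᵥ A *ᵥ v = 0 := by
    refine ⟨le_antisymm ?_ (hT.dotProduct_mulVec_nonneg v), le_antisymm ?_ (hA.dotProduct_mulVec_nonneg v)⟩
    · rw [add_comm, add_eq_zero_iff_eq_neg] at hs0
      simpa only [hs0, neg_nonneg] using hA.dotProduct_mulVec_nonneg v
    · simpa only [add_eq_zero_iff_eq_neg.mp hs0, neg_nonneg] using hT.dotProduct_mulVec_nonneg v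
  have hT0 : T *ᵥ v = 0 := (hT.dotProduct_mulVec_zero_iff v).mp h_van.1
  have hA0 : A *ᵥ v = 0 := (hA.dotProduct_mulVec_zero_iff v).mp h_van.2
  have htv : t • v = 0 := by rw [← hv', sub_mulVec, hT0, hA0, sub_zero]
  have : t = 0 := by
    by_contra ht0
    exact hv (by simpa [smul_eq_zero, ht0] using htv)
  exact absurd this (ne_of_lt ht)

private lemma key_eps' {A T : Matrix (Fin d) (Fin d) ℂ} (hA : A.PosSemidef)
    (hT : T.PosSemidef) (hTA : (T - A).PosSemidef) {ε : ℝ} (hε : 0 < ε) :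
    (((T + (ε:ℂ) • 1)⁻¹) * (A * A)).trace.re ≤ A.trace.re := by
  set Tε : Matrix (Fin d) (Fin d) ℂ := T + (ε:ℂ) • 1 with hTεdef
  have hTεpd : Tε.PosDef := Matrix.PosDef.posSemidef_add hT (smul_one_posDef' hε)
  have hWpd : (Tε⁻¹).PosDef := hTεpd.inv
  set W : Matrix (Fin d) (Fin d) ℂ := Tε⁻¹ with hWdef
  set R := hWpd.posSemidef.sqrt with hRdef
  have hRpsd : R.PosSemidef := hWpd.posSemidef.posSemidef_sqrt
  have hRR : R * R = W := hWpd.posSemidef.sqrt_mul_self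
  have hRH : Rᴴ = R := hRpsd.1
  have hdetTε : IsUnit Tε.det := hTεpd.det_pos.ne'.isUnit
  have hdetR : IsUnit R.det := by
    have hdW : W.det ≠ 0 := hWpd.det_pos.ne'
    rw [← hRR, Matrix.det_mul] at hdW
    exact (mul_self_ne_zero.mp hdW).isUnit
  have hRRi : R * R⁻¹ = 1 := Matrix.mul_nonsing_inv R hdetR
  have hRiR : R⁻¹ * R = 1 := Matrix.nonsing_inv_mul R hdetR
  have hTεW : Tε = R⁻¹ * R⁻¹ := by
    rw [← Matrix.mul_inv_rev, hRR, hWdef, Matrix.nonsing_inv_nonsing_inv Tε hdetTε]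
  have hRTR : R * Tε * R = 1 := by
    rw [hTεW, show R * (R⁻¹ * R⁻¹) * R = (R * R⁻¹) * (R⁻¹ * R) from by
      simp only [Matrix.mul_assoc], hRRi, hRiR, Matrix.one_mul]
  -- M := R * A * R
  set M : Matrix (Fin d) (Fin d) ℂ := R * A * R with hMdef
  have hMpsd : M.PosSemidef := by
    have := hA.mul_mul_conjTranspose_same R
    rwa [hRH] at this
  have h1M : ((1 : Matrix (Fin d) (Fin d) ℂ) - M).PosSemidef := by
    have hps : (Tε - A).PosSemidef := by
      have : Tε - A = (T - A) + (ε:ℂ) • 1 := by rw [hTεdef]; abel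
      rw [this]
      exact hTA.add (smul_one_posDef' hε).posSemidef
    have hcon := hps.mul_mul_conjTranspose_same R
    rw [hRH] at hcon
    have : R * (Tε - A) * R = 1 - M := by
      rw [Matrix.mul_sub, Matrix.sub_mul, hRTR, hMdef]
    rwa [this] at hcon
  have hMM : (M - M * M).PosSemidef := psd_sub_sq' hMpsd h1M
  have hfin : (A - A * W * A).PosSemidef := by
    have hcon := hMM.mul_mul_conjTranspose_same R⁻¹
    have hRiH : (R⁻¹)ᴴ = R⁻¹ := by rw [Matrix.conjTranspose_nonsing_inv, hRH]
    rw [hRiH] at hcon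
    have hcol1 : R⁻¹ * M * R⁻¹ = A := by
      rw [hMdef]
      rw [show R⁻¹ * (R * A * R) * R⁻¹ = (R⁻¹ * R) * A * (R * R⁻¹) by
        simp only [Matrix.mul_assoc]]
      rw [hRiR, hRRi, Matrix.one_mul, Matrix.mul_one]
    have hcol2 : R⁻¹ * (M * M) * R⁻¹ = A * W * A := by
      rw [hMdef, ← hRR]
      rw [show R⁻¹ * ((R * A * R) * (R * A * R)) * R⁻¹
          = (R⁻¹ * R) * (A * (R * R) * A) * (R * R⁻¹) by simp only [Matrix.mul_assoc]]
      rw [hRiR, hRRi, Matrix.one_mul, Matrix.mul_one, Matrix.mul_assoc]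
    have : R⁻¹ * (M - M * M) * R⁻¹ = A - A * W * A := by
      rw [Matrix.mul_sub, Matrix.sub_mul, hcol1, hcol2]
    rwa [this] at hcon
  have htr : (W * (A * A)).trace = (A * W * A).trace := by
    rw [← Matrix.mul_assoc, Matrix.trace_mul_comm (W * A) A, ← Matrix.mul_assoc,
      Matrix.trace_mul_comm (A * W) A]
  rw [htr]
  
  exact trace_re_mono' hfin

private lemma key_T' {T : Matrix (Fin d) (Fin d) ℂ} (hT : T.PosSemidef) {ε : ℝ} (hε : 0 < ε) :
    T.trace.re ≤ (((T + (ε:ℂ) • 1)⁻¹) * (T * T)).trace.re + ε * d := by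
  set Tε : Matrix (Fin d) (Fin d) ℂ := T + (ε:ℂ) • 1 with hTεdef
  have hTεpd : Tε.PosDef := Matrix.PosDef.posSemidef_add hT (smul_one_posDef' hε)
  have hWpd : (Tε⁻¹).PosDef := hTεpd.inv
  set W : Matrix (Fin d) (Fin d) ℂ := Tε⁻¹ with hWdef
  set R := hWpd.posSemidef.sqrt with hRdef
  have hRpsd : R.PosSemidef := hWpd.posSemidef.posSemidef_sqrt
  have hRR : R * R = W := hWpd.posSemidef.sqrt_mul_self
  have hRH : Rᴴ = R := hRpsd.1
  have hdetTε : IsUnit Tε.det := hTεpd.det_pos.ne'.isUnit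
  have hdetR : IsUnit R.det := by
    have hdW : W.det ≠ 0 := hWpd.det_pos.ne'
    rw [← hRR, Matrix.det_mul] at hdW
    exact (mul_self_ne_zero.mp hdW).isUnit
  have hRRi : R * R⁻¹ = 1 := Matrix.mul_nonsing_inv R hdetR
  have hRiR : R⁻¹ * R = 1 := Matrix.nonsing_inv_mul R hdetR
  have hTεW : Tε = R⁻¹ * R⁻¹ := by
    rw [← Matrix.mul_inv_rev, hRR, hWdef, Matrix.nonsing_inv_nonsing_inv Tε hdetTε]
  have hRTR : R * Tε * R = 1 := by
    rw [hTεW, show R * (R⁻¹ * R⁻¹) * R = (R * R⁻¹) * (R⁻¹ * R) from by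
      simp only [Matrix.mul_assoc], hRRi, hRiR, Matrix.one_mul]
  have hWTε : W * Tε = 1 := Matrix.nonsing_inv_mul Tε hdetTε
  -- W * (T * T) = T - ε • (W * T)
  have hWT : W * T = 1 - (ε:ℂ) • W := by
    have : W * Tε = W * T + (ε:ℂ) • W := by
      rw [hTεdef, Matrix.mul_add, Matrix.mul_smul, Matrix.mul_one]
    rw [hWTε] at this
    rw [eq_sub_iff_add_eq, ← this]
  have hWTT : W * (T * T) = T - (ε:ℂ) • (W * T) := by
    conv_lhs => rw [← Matrix.mul_assoc, hWT, Matrix.sub_mul, Matrix.one_mul, Matrix.smul_mul]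
  -- trace (W*T) = trace (R*T*R) and is at most d
  have htrWT : (W * T).trace = (R * T * R).trace := by
    rw [← hRR, Matrix.mul_assoc, Matrix.trace_mul_comm R (R * T), Matrix.mul_assoc]
  have hRTRle : (R * T * R).trace.re ≤ (d : ℝ) := by
    have hps : (Tε - T).PosSemidef := by
      have : Tε - T = (ε:ℂ) • 1 := by rw [hTεdef]; abel
      rw [this]; exact (smul_one_posDef' hε).posSemidef
    have hcon := hps.mul_mul_conjTranspose_same R
    rw [hRH] at hcon
    have : R * (Tε - T) * R = 1 - R * T * R := by
      rw [Matrix.mul_sub, Matrix.sub_mul, hRTR]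
    rw [this] at hcon
    have := trace_re_mono' hcon
    rwa [Matrix.trace_one, show ((Fintype.card (Fin d) : ℂ)).re = (d:ℝ) by simp] at this
  have hWTnonneg : 0 ≤ (W * T).trace.re := by
    rw [htrWT]
    have hc := hT.mul_mul_conjTranspose_same R
    rw [hRH] at hc
    exact psd_trace_re_nonneg' hc
  have hmain : (W * (T * T)).trace.re = T.trace.re - ε * (W * T).trace.re := by
    rw [hWTT, Matrix.trace_sub, Matrix.trace_smul, Complex.sub_re]
    congr 1
    rw [smul_eq_mul, Complex.re_ofReal_mul]
  rw [hmain]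
  have : ε * (W * T).trace.re ≤ ε * d := by
    apply mul_le_mul_of_nonneg_left _ hε.le
    rw [← htrWT] at hRTRle
    exact hRTRle
  linarith


end Aux

theorem trace_sqrt_subadditive {d : ℕ} (X Y : Matrix (Fin d) (Fin d) ℂ)
    (hX : X.PosSemidef) (hY : Y.PosSemidef) :
    (((hX.add hY).sqrt).trace).re ≤ ((hX.sqrt).trace).re + ((hY.sqrt).trace).re := by
  set A := hX.sqrt with hAdef
  set B := hY.sqrt with hBdef
  set T := (hX.add hY).sqrt with hTdef
  have hA : A.PosSemidef := hX.posSemidef_sqrt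
  have hB : B.PosSemidef := hY.posSemidef_sqrt
  have hT : T.PosSemidef := (hX.add hY).posSemidef_sqrt
  have hAA : A * A = X := hX.sqrt_mul_self
  have hBB : B * B = Y := hY.sqrt_mul_self
  have hTT : T * T = X + Y := (hX.add hY).sqrt_mul_self
  have hTA : (T - A).PosSemidef := by
    apply psd_sub_of_sq_psd_sub' hA hT
    rw [hAA, hTT, add_sub_cancel_left]
    exact hY
  have hTB : (T - B).PosSemidef := by
    apply psd_sub_of_sq_psd_sub' hB hT
    rw [hBB, hTT, add_sub_cancel_right]
    exact hX
  have key : ∀ ε : ℝ, 0 < ε → T.trace.re ≤ A.trace.re + B.trace.re + ε * d := by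
    intro ε hε
    have h1 := key_eps' hA hT hTA hε
    have h2 := key_eps' hB hT hTB hε
    have h3 := key_T' hT hε
    have hsplit : ((T + (ε:ℂ) • 1)⁻¹ * (T * T)).trace.re
        = ((T + (ε:ℂ) • 1)⁻¹ * (A * A)).trace.re + ((T + (ε:ℂ) • 1)⁻¹ * (B * B)).trace.re := by
      rw [hAA, hBB, hTT, Matrix.mul_add, Matrix.trace_add, Complex.add_re]
    rw [hsplit] at h3
    linarith
  by_contra hlt
  push_neg at hlt
  set δ := T.trace.re - (A.trace.re + B.trace.re) with hδ
  have hδpos : 0 < δ := by simp [hδ]; linarith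
  have := key (δ / (d + 1)) (by positivity)
  have hlt2 : (δ / (d + 1)) * d < δ := by
    rw [div_mul_eq_mul_div, div_lt_iff₀ (by positivity)]
    nlinarith
  linarith
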